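/- Let p = ⟨V_1, …, V_n⟩ be a b-possibly causal definite status path in a maximal PDAG G. If there exists an index i ∈ {1, …, n−1} such that the edge V_i → V_{i+1} is in G, then the subpath p(V_i, V_n) = ⟨V_i, V_{i+1}, …, V_n⟩ is a causal (fully directed) path in G. -/

import Mathlib

/-- A partially directed graph with at most one edge between any two nodes
and no directed cycles (a PDAG). -/
structure PDAG (V : Type) where
  dir : V → V → Prop
  undir : V → V → Prop
  undir_symm : ∀ {x y}, undir x y → undir y x
  undir_irrefl : ∀ x, ¬ undir x x
  dir_not_undir : ∀ x y, dir x y → ¬ undir x y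
  acyclic : ∀ x, ¬ Relation.TransGen dir x x

namespace PDAG

variable {V : Type}

/-- There is an undirected edge between `x` and `y`. -/
def undirE (G : PDAG V) (x y : V) : Prop := G.undir x y ∨ G.undir y x

/-- `x` and `y` are adjacent. -/
def adj (G : PDAG V) (x y : V) : Prop := G.dir x y ∨ G.dir y x ∨ G.undirE x y

/-- The list of consecutive pairs of a list. -/
def consPairs (p : List V) : List (V × V) := p.zip p.tail

/-- The list of consecutive triples of a list. -/
def triples : List V → List (V × V × V)
  | a :: b :: c :: rest => (a, b, c) :: triples (b :: c :: rest)
  | _ => []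

/-- `p` is a path in `G`: at least two distinct nodes, pairwise successive adjacency. -/
def IsPath (G : PDAG V) (p : List V) : Prop :=
  2 ≤ p.length ∧ p.Nodup ∧ ∀ e ∈ consPairs p, G.adj e.1 e.2

/-- `p` is a path in `G` from `x` to `y`. -/
def PathFromTo (G : PDAG V) (p : List V) (x y : V) : Prop :=
  G.IsPath p ∧ p.head? = some x ∧ p.getLast? = some y

/-- `p` is a causal (fully directed) path in `G`. -/
def IsCausal (G : PDAG V) (p : List V) : Prop :=
  2 ≤ p.length ∧ p.Nodup ∧ ∀ e ∈ consPairs p, G.dir e.1 e.2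

/-- `p` is a non-causal path: it contains at least one edge directed backwards. -/
def NonCausal (G : PDAG V) (p : List V) : Prop :=
  G.IsPath p ∧ ∃ e ∈ consPairs p, G.dir e.2 e.1

/-- `p` is b-possibly causal in `G`: there is no edge `V_i ← V_j` for `i < j`. -/
def BPossCausal (G : PDAG V) (p : List V) : Prop :=
  G.IsPath p ∧ ∀ i j : Fin p.length, (i : ℕ) < (j : ℕ) → ¬ G.dir (p.get j) (p.get i)

/-- `p` is b-non-causal in `G`: some edge `V_i ← V_j` with `i < j` exists in `G`. -/
def BNonCausal (G : PDAG V) (p : List V) : Prop :=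
  G.IsPath p ∧ ∃ i j : Fin p.length, (i : ℕ) < (j : ℕ) ∧ G.dir (p.get j) (p.get i)

/-- A path with no edge on it pointing backwards (possibly causal in the local sense). -/
def LocalPossCausal (G : PDAG V) (p : List V) : Prop :=
  G.IsPath p ∧ ∀ e ∈ consPairs p, ¬ G.dir e.2 e.1

/-- `p` is unshielded: the outer nodes of every consecutive triple are non-adjacent. -/
def Unshielded (G : PDAG V) (p : List V) : Prop :=
  ∀ t ∈ triples p, ¬ G.adj t.1 t.2.2

/-- The middle node of a triple is a collider. -/
def ColliderAt (G : PDAG V) (t : V × V × V) : Prop :=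
  G.dir t.1 t.2.1 ∧ G.dir t.2.2 t.2.1

/-- The middle node of a triple is a definite non-collider. -/
def DefNonColliderAt (G : PDAG V) (t : V × V × V) : Prop :=
  G.dir t.2.1 t.1 ∨ G.dir t.2.1 t.2.2 ∨
    (G.undirE t.1 t.2.1 ∧ G.undirE t.2.1 t.2.2 ∧ ¬ G.adj t.1 t.2.2)

/-- `p` is a definite status path. -/
def DefiniteStatus (G : PDAG V) (p : List V) : Prop :=
  ∀ t ∈ triples p, G.ColliderAt t ∨ G.DefNonColliderAt t

/-- `y` is a descendant of `x` in `G` (via directed paths; every node descends from itself). -/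
def Desc (G : PDAG V) (x y : V) : Prop := x = y ∨ Relation.TransGen G.dir x y

/-- `p` is d-connecting given `Z`: every collider on `p` has a descendant in `Z`,
and every (definite) non-collider on `p` is not in `Z`. -/
def DConn (G : PDAG V) (p : List V) (Z : Set V) : Prop :=
  ∀ t ∈ triples p,
    (G.ColliderAt t → ∃ z ∈ Z, G.Desc t.2.1 z) ∧ (¬ G.ColliderAt t → t.2.1 ∉ Z)

/-- `Z` blocks the path `p`. -/
def Blocked (G : PDAG V) (p : List V) (Z : Set V) : Prop := ¬ G.DConn p Z

/-- `G` is closed under Meek's orientation rules R1–R4 (a maximal PDAG). -/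
def ClosedMeek (G : PDAG V) : Prop :=
  (∀ a b c, G.dir a b → G.undirE b c → ¬ G.adj a c → G.dir b c) ∧
  (∀ a b c, G.dir a b → G.dir b c → G.undirE a c → G.dir a c) ∧
  (∀ a b c d, G.undirE a b → G.undirE a c → G.undirE a d →
     G.dir c b → G.dir d b → ¬ G.adj c d → G.dir a b) ∧
  (∀ a b c d, G.undirE a b → G.undirE a c → G.undirE a d →
     G.dir d c → G.dir b d → ¬ G.adj b c → G.dir a c)

/-- `G` is a DAG: it has no undirected edges. -/
def IsDAG (G : PDAG V) : Prop := ∀ x y, ¬ G.undir x y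

/-- `G` and `H` have the same unshielded colliders. -/
def SameUC (G H : PDAG V) : Prop :=
  ∀ a b c, (G.dir a b ∧ G.dir c b ∧ ¬ G.adj a c) ↔ (H.dir a b ∧ H.dir c b ∧ ¬ H.adj a c)

/-- `H` is represented by `G`: same adjacencies, same unshielded colliders,
and every directed edge of `G` is in `H`. -/
def RepresentedBy (H G : PDAG V) : Prop :=
  (∀ x y, H.adj x y ↔ G.adj x y) ∧ SameUC H G ∧ ∀ x y, G.dir x y → H.dir x y

/-- `p` is a proper path from (a member of) `X` to (a member of) `Y`:
only its first node lies in `X`. -/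
def ProperPathFromTo (G : PDAG V) (X Y : Set V) (p : List V) : Prop :=
  G.IsPath p ∧ (∃ x ∈ X, p.head? = some x) ∧ (∃ y ∈ Y, p.getLast? = some y) ∧
    ∀ v ∈ p.tail, v ∉ X

/-- `w'` is a b-possible descendant of the node `w`. -/
def BPossDescNode (G : PDAG V) (w w' : V) : Prop :=
  w' = w ∨ ∃ p, G.BPossCausal p ∧ p.head? = some w ∧ p.getLast? = some w'

/-- The b-possible descendants of the node set `X` in `G`. -/
def BPossDe (G : PDAG V) (X : Set V) : Set V :=
  {w | w ∈ X ∨ ∃ x ∈ X, ∃ p, G.BPossCausal p ∧ p.head? = some x ∧ p.getLast? = some w}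

/-- The b-possible ancestors of the node set `X` in `G`. -/
def BPossAn (G : PDAG V) (X : Set V) : Set V :=
  {w | w ∈ X ∨ ∃ x ∈ X, ∃ p, G.BPossCausal p ∧ p.head? = some w ∧ p.getLast? = some x}

/-- The b-forbidden set relative to `(X, Y)` in `G`. -/
def BForb (G : PDAG V) (X Y : Set V) : Set V :=
  {w' | ∃ w p, w ∉ X ∧ G.ProperPathFromTo X Y p ∧ G.BPossCausal p ∧ w ∈ p ∧
    G.BPossDescNode w w'}

/-- `G` is b-amenable relative to `(X, Y)`: every proper b-possibly causal path
from `X` to `Y` starts with a directed edge out of `X`. -/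
def BAmenable (G : PDAG V) (X Y : Set V) : Prop :=
  ∀ p, G.ProperPathFromTo X Y p → G.BPossCausal p →
    ∀ a b, p.head? = some a → p.tail.head? = some b → G.dir a b

/-- The b-blocking condition: `Z` blocks every proper b-non-causal definite status
path from `X` to `Y` in `G`. -/
def BBlocking (G : PDAG V) (X Y Z : Set V) : Prop :=
  ∀ p, G.ProperPathFromTo X Y p → G.BNonCausal p → G.DefiniteStatus p → G.Blocked p Z

/-- The b-adjustment criterion for `Z` relative to `(X, Y)` in `G`. -/
def BAdjCrit (G : PDAG V) (X Y Z : Set V) : Prop :=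
  G.BAmenable X Y ∧ Z ∩ G.BForb X Y = ∅ ∧ G.BBlocking X Y Z

/-- In a DAG: `Z` blocks every proper non-causal path from `X` to `Y`. -/
def DagBlocking (D : PDAG V) (X Y Z : Set V) : Prop :=
  ∀ p, D.ProperPathFromTo X Y p → D.NonCausal p → D.Blocked p Z

/-- The canonical adjustment set `b-Adjust(X, Y, G)`. -/
def BAdjust (G : PDAG V) (X Y : Set V) : Set V :=
  G.BPossAn (X ∪ Y) \ (X ∪ Y ∪ G.BForb X Y)

/-- `C` is a CPDAG: a maximal PDAG representing a Markov equivalence class of DAGs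
in which every undirected edge is realized in both orientations by represented DAGs. -/
def IsCPDAG (C : PDAG V) : Prop :=
  C.ClosedMeek ∧ (∃ D : PDAG V, D.IsDAG ∧ RepresentedBy D C) ∧
  ∀ x y, C.undirE x y →
    (∃ D : PDAG V, D.IsDAG ∧ RepresentedBy D C ∧ D.dir x y) ∧
    (∃ D : PDAG V, D.IsDAG ∧ RepresentedBy D C ∧ D.dir y x)

end PDAG


namespace PDAG

variable {V : Type}

lemma consPairs_cons_cons (x y : V) (t : List V) :
    consPairs (x :: y :: t) = (x, y) :: consPairs (y :: t) := rfl

lemma mem_consPairs_cons {e : V × V} {x : V} {l : List V}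
    (h : e ∈ consPairs l) : e ∈ consPairs (x :: l) := by
  cases l with
  | nil => simp [consPairs] at h
  | cons y t => rw [consPairs_cons_cons]; exact List.mem_cons_of_mem _ h

lemma mem_consPairs_append {e : V × V} {q l : List V}
    (h : e ∈ consPairs l) : e ∈ consPairs (q ++ l) := by
  induction q with
  | nil => exact h
  | cons x q ih => exact mem_consPairs_cons ih

lemma mem_triples_cons {t : V × V × V} {x : V} {l : List V}
    (h : t ∈ triples l) : t ∈ triples (x :: l) := by
  match l with
  | [] => simp [triples] at h
  | [y] => simp [triples] at h
  | y :: z :: s => exact List.mem_cons_of_mem _ h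

lemma mem_triples_append {t : V × V × V} {q l : List V}
    (h : t ∈ triples l) : t ∈ triples (q ++ l) := by
  induction q with
  | nil => exact h
  | cons x q ih => exact mem_triples_cons ih

lemma consPairs_index {p : List V} {e : V × V} (h : e ∈ consPairs p) :
    ∃ i j : Fin p.length, (i : ℕ) < (j : ℕ) ∧ p.get i = e.1 ∧ p.get j = e.2 := by
  induction p with
  | nil => simp [consPairs] at h
  | cons x l ih =>
    cases l with
    | nil => simp [consPairs] at h
    | cons y t =>
      rw [consPairs_cons_cons] at h
      rcases List.mem_cons.mp h with h | h
      · subst h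
        exact ⟨⟨0, by simp⟩, ⟨1, by simp⟩, by simp, rfl, rfl⟩
      · obtain ⟨i, j, hij, hi, hj⟩ := ih h
        refine ⟨⟨i + 1, by simpa using Nat.succ_lt_succ i.isLt⟩,
               ⟨j + 1, by simpa using Nat.succ_lt_succ j.isLt⟩,
               Nat.succ_lt_succ hij, ?_, ?_⟩
        · simpa using hi
        · simpa using hj

lemma causal_of_head_dir (G : PDAG V) :
    ∀ (r : List V) (a b : V),
    (∀ e ∈ consPairs (a :: b :: r), ¬ G.dir e.2 e.1) →
    (∀ t ∈ triples (a :: b :: r), G.ColliderAt t ∨ G.DefNonColliderAt t) →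
    G.dir a b → ∀ e ∈ consPairs (a :: b :: r), G.dir e.1 e.2 := by
  intro r
  induction r with
  | nil =>
    intro a b _ _ hab e he
    simp only [consPairs_cons_cons] at he
    rcases List.mem_cons.mp he with rfl | he
    · exact hab
    · simp [consPairs] at he
  | cons c r ih =>
    intro a b hnb hds hab e he
    have htr : (a, b, c) ∈ triples (a :: b :: c :: r) := List.mem_cons_self
    have hnbc : ¬ G.dir c b := hnb (b, c)
      (by rw [consPairs_cons_cons]; exact List.mem_cons_of_mem _ (List.mem_cons_self))
    have hbc : G.dir b c := by
      rcases hds _ htr with hcol | hnc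
      · exact absurd hcol.2 hnbc
      · rcases hnc with h | h | h
        · exact absurd h (hnb (a, b) (List.mem_cons_self))
        · exact h
        · rcases h.1 with h' | h'
          · exact absurd h' (G.dir_not_undir a b hab)
          · exact absurd (G.undir_symm h') (G.dir_not_undir a b hab)
    rw [consPairs_cons_cons] at he
    rcases List.mem_cons.mp he with rfl | he
    · exact hab
    · exact ih b c (fun e he => hnb e (mem_consPairs_cons he))
        (fun t ht => hds t (mem_triples_cons ht)) hbc e he

end PDAG

/-- if a b-possibly causal definite status path contains a directed edge
`V_i → V_{i+1}`, then the subpath from `V_i` to the end is a causal path. -/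
theorem stmt3 {V : Type} (G : PDAG V) (hG : G.ClosedMeek) (p : List V)
    (hpc : G.BPossCausal p) (hds : G.DefiniteStatus p)
    (q : List V) (a b : V) (r : List V) (hsplit : p = q ++ a :: b :: r)
    (hdir : G.dir a b) :
    G.IsCausal (a :: b :: r) := by
  obtain ⟨hpath, hnb⟩ := hpc
  have hsub : (a :: b :: r) <:+ p := ⟨q, hsplit.symm⟩
  have hnd : (a :: b :: r).Nodup := hsub.sublist.nodup hpath.2.1
  have hnb' : ∀ e ∈ PDAG.consPairs (a :: b :: r), ¬ G.dir e.2 e.1 := by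
    intro e he
    have hep : e ∈ PDAG.consPairs p := by
      rw [hsplit]; exact PDAG.mem_consPairs_append he
    obtain ⟨i, j, hij, hi, hj⟩ := PDAG.consPairs_index hep
    rw [← hi, ← hj]
    exact hnb i j hij
  have hds' : ∀ t ∈ PDAG.triples (a :: b :: r), G.ColliderAt t ∨ G.DefNonColliderAt t := by
    intro t ht
    apply hds
    rw [hsplit]
    exact PDAG.mem_triples_append ht
  exact ⟨by simp, hnd, G.causal_of_head_dir r a b hnb' hds' hdir⟩
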